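/- Let k be a field, write Δ = x_1x_3 + x_2² ∈ k[x_1,x_2,x_3], and for α ∈ k define N_α = (x_1 − 2αx_2Δ − α²x_3Δ², x_2 + αx_3Δ, x_3). Then for all α, β ∈ k one has N_α∘N_β = N_{α+β}, each N_α belongs to SAut_k(A^3) (it is an automorphism of Jacobian 1), and if |k| > 2, then every normal subgroup of SAut_k(A^3) containing SL_3(k) contains N_α for every α ∈ k; in particular it contains the Nagata automorphism N_1. -/

import Mathlib

open MvPolynomial

/-- Endomorphisms of affine `n`-space over `R`: `n`-tuples of polynomials in
`R[x_1,…,x_n]`, with composition given by substitution. -/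
def PolyEnd (R : Type*) [CommRing R] (n : ℕ) : Type _ := Fin n → MvPolynomial (Fin n) R

namespace PolyEnd

variable {R S : Type*} [CommRing R] [CommRing S] {n : ℕ}

noncomputable instance : Monoid (PolyEnd R n) where
  one := fun i => X i
  mul f g := fun i => bind₁ g (f i)
  mul_assoc f g h := funext fun i => (bind₁_bind₁ g h (f i) :)
  one_mul f := funext fun i => (bind₁_X_right f i :)
  mul_one f := funext fun i => (show bind₁ X (f i) = f i by
    rw [bind₁_X_left, AlgHom.id_apply] :)

@[simp] lemma mul_apply (f g : PolyEnd R n) (i : Fin n) :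
    (f * g) i = bind₁ g (f i) := rfl

@[simp] lemma one_apply (i : Fin n) : (1 : PolyEnd R n) i = X i := rfl

/-- The Jacobian determinant of an endomorphism. -/
noncomputable def jac (f : PolyEnd R n) : MvPolynomial (Fin n) R :=
  (Matrix.of fun i j => pderiv j (f i)).det

/-- The chain rule for partial derivatives of a substitution. -/
lemma pderiv_bind₁ (g : Fin n → MvPolynomial (Fin n) R)
    (p : MvPolynomial (Fin n) R) (j : Fin n) :
    pderiv j (bind₁ g p) = ∑ i, bind₁ g (pderiv i p) * pderiv j (g i) := by
  induction p using MvPolynomial.induction_on with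
  | C a => simp
  | add p q hp hq => simp [hp, hq, Finset.sum_add_distrib, add_mul]
  | mul_X p i hp =>
      rw [map_mul, bind₁_X_right, pderiv_mul, hp]
      have key : ∀ l : Fin n, bind₁ g (pderiv l (p * X i)) * pderiv j (g l)
          = bind₁ g (pderiv l p) * pderiv j (g l) * g i
            + (if l = i then bind₁ g p * pderiv j (g i) else 0) := by
        intro l
        rw [pderiv_mul, pderiv_X]
        by_cases h : l = i
        · subst h
          simp only [Pi.single_apply, if_pos rfl, map_add, map_mul, bind₁_X_right,
            bind₁_C_right, if_pos rfl]
          ring_nf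
          simp [mul_comm, mul_left_comm, mul_assoc]
        · simp only [Pi.single_apply, if_neg (Ne.symm h), if_neg h, mul_zero, map_mul,
            map_add, map_zero, add_zero, bind₁_X_right]
          ring
      rw [Finset.sum_congr rfl fun l _ => key l, Finset.sum_add_distrib]
      simp [Finset.sum_mul]

lemma jac_one : jac (1 : PolyEnd R n) = 1 := by
  unfold jac
  have : (Matrix.of fun i j => pderiv j ((1 : PolyEnd R n) i))
      = (1 : Matrix (Fin n) (Fin n) (MvPolynomial (Fin n) R)) := by
    ext i j
    simp [Matrix.one_apply, pderiv_X, Pi.single_apply, eq_comm]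
  rw [this, Matrix.det_one]

/-- The chain rule for Jacobians. -/
lemma jac_mul (f g : PolyEnd R n) : jac (f * g) = bind₁ g (jac f) * jac g := by
  unfold jac
  have : (Matrix.of fun i j => pderiv j ((f * g) i))
      = (Matrix.of fun i l => pderiv l (f i)).map (bind₁ g)
        * (Matrix.of fun l j => pderiv j (g l)) := by
    ext i j : 1
    simp [Matrix.mul_apply, pderiv_bind₁ (g : Fin n → MvPolynomial (Fin n) R)]
  rw [this, Matrix.det_mul]
  congr 1
  exact ((bind₁ g).map_det (Matrix.of fun i l => pderiv l (f i))).symm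

end PolyEnd

/-- Automorphisms of affine `n`-space over `R` : endomorphisms admitting a two-sided
compositional inverse. -/
abbrev PolyAut (R : Type*) [CommRing R] (n : ℕ) := (PolyEnd R n)ˣ

namespace PolyAut

variable {R S : Type*} [CommRing R] [CommRing S] {n : ℕ}

lemma bind₁_val_injective (f : PolyAut R n) :
    Function.Injective (bind₁ (σ := Fin n) (f.val : Fin n → MvPolynomial (Fin n) R)) := by
  intro p q h
  have hinv : ∀ r : MvPolynomial (Fin n) R, bind₁ (f.inv : Fin n → _) (bind₁ (f.val : Fin n → _) r) = r := by
    intro r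
    erw [bind₁_bind₁]
    have : (fun i => bind₁ (f.inv : Fin n → _) ((f.val : Fin n → _) i)) = (f.val * f.inv : PolyEnd R n) := rfl
    rw [this, f.val_inv]
    show bind₁ (fun i => X i) r = r
    rw [show (fun i : Fin n => (X i : MvPolynomial (Fin n) R)) = X from rfl,
      bind₁_X_left, AlgHom.id_apply]
  calc p = bind₁ (f.inv : Fin n → _) (bind₁ (f.val : Fin n → _) p) := (hinv p).symm
    _ = bind₁ (f.inv : Fin n → _) (bind₁ (f.val : Fin n → _) q) := by rw [h]
    _ = q := hinv q

end PolyAut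

/-- The subgroup of automorphisms of Jacobian `1`. -/
noncomputable def SAutGrp (R : Type*) [CommRing R] (n : ℕ) : Subgroup (PolyAut R n) where
  carrier := {f | PolyEnd.jac f.val = 1}
  one_mem' := PolyEnd.jac_one
  mul_mem' := by
    intro f g hf hg
    show PolyEnd.jac (f.val * g.val) = 1
    rw [PolyEnd.jac_mul, hf, hg, map_one, one_mul]
  inv_mem' := by
    intro f hf
    show PolyEnd.jac f.inv = 1
    apply PolyAut.bind₁_val_injective f
    have h1 : PolyEnd.jac (f.inv * f.val) = 1 := by
      rw [f.inv_val]; exact PolyEnd.jac_one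
    rw [PolyEnd.jac_mul, hf, mul_one] at h1
    rw [map_one]
    exact h1

lemma mem_SAutGrp_iff {R : Type*} [CommRing R] {n : ℕ} (f : PolyAut R n) :
    f ∈ SAutGrp R n ↔ PolyEnd.jac f.val = 1 := Iff.rfl

section Translations

variable {R : Type*} [CommRing R] {n : ℕ}

/-- The translation endomorphism `(x_1 + c_1, …, x_n + c_n)`. -/
noncomputable def translEnd (c : Fin n → R) : PolyEnd R n := fun i => X i + C (c i)

lemma translEnd_mul (c d : Fin n → R) :
    translEnd c * translEnd d = translEnd (c + d) := by
  funext i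
  show bind₁ (translEnd d) (translEnd c i) = translEnd (c + d) i
  simp only [translEnd, map_add, bind₁_C_right]
  rw [show bind₁ (translEnd d) (X i) = translEnd d i from bind₁_X_right _ i]
  erw [bind₁_C_right]
  show X i + C (d i) + C (c i) = X i + C (c i + d i)
  rw [map_add]; ring

lemma translEnd_zero : translEnd (0 : Fin n → R) = 1 := by
  funext i
  show X i + C 0 = X i
  simp

/-- The translation automorphism `(x_1 + c_1, …, x_n + c_n)`. -/
noncomputable def transl (c : Fin n → R) : PolyAut R n where
  val := translEnd c
  inv := translEnd (-c)
  val_inv := by rw [translEnd_mul, add_neg_cancel, translEnd_zero]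
  inv_val := by rw [translEnd_mul, neg_add_cancel, translEnd_zero]

@[simp] lemma transl_val (c : Fin n → R) : (transl c).val = translEnd c := rfl

lemma jac_translEnd (c : Fin n → R) : PolyEnd.jac (translEnd c) = 1 := by
  unfold PolyEnd.jac
  have : (Matrix.of fun i j => pderiv j (translEnd c i))
      = (1 : Matrix (Fin n) (Fin n) (MvPolynomial (Fin n) R)) := by
    ext i j
    simp [translEnd, Matrix.one_apply, pderiv_X, Pi.single_apply, eq_comm]
  rw [this, Matrix.det_one]

lemma transl_mem_SAutGrp (c : Fin n → R) : transl c ∈ SAutGrp R n := jac_translEnd c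

/-- The translation as element of `SAut`. -/
noncomputable def translS (c : Fin n → R) : ↥(SAutGrp R n) := ⟨transl c, transl_mem_SAutGrp c⟩

/-- `f` is a translation. -/
def IsTranslation (f : PolyAut R n) : Prop := ∃ c : Fin n → R, f = transl c

end Translations

section Linear

variable {R : Type*} [CommRing R] {n : ℕ}

/-- The linear endomorphism associated with a matrix. -/
noncomputable def linEnd (M : Matrix (Fin n) (Fin n) R) : PolyEnd R n :=
  fun i => ∑ j, C (M i j) * X j

/-- `f` is a linear automorphism (i.e. in the image of `GL_n`). -/
def IsLinear (f : PolyAut R n) : Prop := ∃ M : Matrix (Fin n) (Fin n) R, f.val = linEnd M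

/-- `f` is a linear automorphism given by a matrix of determinant 1
(i.e. in the image of `SL_n`). -/
def MemSL (f : PolyAut R n) : Prop :=
  ∃ M : Matrix (Fin n) (Fin n) R, M.det = 1 ∧ f.val = linEnd M

/-- `f` is a triangular automorphism. -/
def IsTriangular (f : PolyAut R n) : Prop :=
  ∃ (a : Fin n → Rˣ) (b : Fin n → MvPolynomial (Fin n) R),
    (∀ i : Fin n, b i ∈ MvPolynomial.supported R {j : Fin n | (j : ℕ) < (i : ℕ)}) ∧
    ∀ i : Fin n, f.val i = C ((a i : R)) * X i + b i

/-- The tame subgroup, generated by linear and triangular automorphisms. -/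
noncomputable def TameGrp (R : Type*) [CommRing R] (n : ℕ) : Subgroup (PolyAut R n) :=
  Subgroup.closure {f | IsLinear f ∨ IsTriangular f}

end Linear

section Map

variable {R S : Type*} [CommRing R] [CommRing S] {n : ℕ}

/-- Applying a ring homomorphism to all coefficients, as a monoid homomorphism of
endomorphisms of affine `n`-space. -/
noncomputable def endMapHom (φ : R →+* S) : PolyEnd R n →* PolyEnd S n where
  toFun f := fun i => MvPolynomial.map φ (f i)
  map_one' := funext fun i => by
    show MvPolynomial.map φ (X i) = X i
    simp
  map_mul' f g := funext fun i => by
    show MvPolynomial.map φ (bind₁ g (f i)) = bind₁ (fun j => MvPolynomial.map φ (g j)) (MvPolynomial.map φ (f i))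
    erw [map_bind₁]

/-- Applying a ring homomorphism to all coefficients, on automorphisms. -/
noncomputable def autMap (φ : R →+* S) : PolyAut R n →* PolyAut S n :=
  Units.map (endMapHom φ)

lemma jac_endMapHom (φ : R →+* S) (f : PolyEnd R n) :
    PolyEnd.jac (endMapHom φ f) = MvPolynomial.map φ (PolyEnd.jac f) := by
  unfold PolyEnd.jac
  have : (Matrix.of fun i j => pderiv j ((endMapHom φ f) i))
      = (Matrix.of fun i j => pderiv j (f i)).map (MvPolynomial.map φ) :=
    Matrix.ext fun i j => pderiv_map
  rw [this, RingHom.map_det]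
  rfl

/-- Specialisation of an automorphism over `R[t]` at a value `t₀ ∈ R`. -/
noncomputable def specAut (t0 : R) : PolyAut (Polynomial R) n →* PolyAut R n :=
  autMap (Polynomial.evalRingHom t0)

lemma specAut_mem_SAutGrp (h : PolyAut (Polynomial R) n)
    (hh : h ∈ SAutGrp (Polynomial R) n) (t0 : R) :
    specAut t0 h ∈ SAutGrp R n := by
  show PolyEnd.jac ((specAut t0 h).val) = 1
  have : (specAut t0 h).val = endMapHom (Polynomial.evalRingHom t0) h.val := rfl
  rw [this, jac_endMapHom, hh, map_one]

/-- Specialisation, from `SAut` over `R[t]` to `SAut` over `R`. -/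
noncomputable def specSAut (t0 : R) (h : PolyAut (Polynomial R) n)
    (hh : h ∈ SAutGrp (Polynomial R) n) : ↥(SAutGrp R n) :=
  ⟨specAut t0 h, specAut_mem_SAutGrp h hh t0⟩

/-- A subgroup `N` of `SAut_k(𝔸ⁿ)` is closed under specialisation if for every
automorphism `h` over `k[t]` of Jacobian `1` all of whose specialisations at
`t₀ ≠ 0` lie in `N`, the specialisation at `0` also lies in `N`. Every subgroup
that is closed in the ind-topology has this property. -/
def ClosedUnderSpec {R : Type*} [CommRing R] {n : ℕ} (N : Subgroup ↥(SAutGrp R n)) : Prop :=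
  ∀ (h : PolyAut (Polynomial R) n) (hh : h ∈ SAutGrp (Polynomial R) n),
    (∀ t0 : R, t0 ≠ 0 → specSAut t0 h hh ∈ N) → specSAut 0 h hh ∈ N

/-- A subgroup `N` of `Aut_k(𝔸ⁿ)` is closed under specialisation if for every
automorphism `h` over `k[t]` all of whose specialisations at `t₀ ≠ 0` lie in `N`,
the specialisation at `0` also lies in `N`. -/
def ClosedUnderSpecAut {R : Type*} [CommRing R] {n : ℕ} (N : Subgroup (PolyAut R n)) : Prop :=
  ∀ h : PolyAut (Polynomial R) n,
    (∀ t0 : R, t0 ≠ 0 → specAut t0 h ∈ N) → specAut 0 h ∈ N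

end Map


/-- `Δ = x₁x₃ + x₂²`. -/
noncomputable def nagDelta (k : Type*) [Field k] : MvPolynomial (Fin 3) k :=
  X 0 * X 2 + X 1 ^ 2

/-- The Nagata family `N_α = (x₁ - 2αx₂Δ - α²x₃Δ², x₂ + αx₃Δ, x₃)`. -/
noncomputable def nagEnd {k : Type*} [Field k] (α : k) : PolyEnd k 3 := fun i =>
  if i = 0 then X 0 - C (2 * α) * X 1 * nagDelta k - C (α ^ 2) * X 2 * nagDelta k ^ 2
  else if i = 1 then X 1 + C α * X 2 * nagDelta k
  else X 2

section NagataHelpers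
variable {k : Type*} [Field k]

private lemma bind₁_X_right_pe (f : PolyEnd k 3) (i : Fin 3) : bind₁ f (X i) = f i :=
  bind₁_X_right f i

private lemma bind₁_C_right_pe (f : PolyEnd k 3) (r : k) : bind₁ f (C r) = C r :=
  bind₁_C_right f r

private lemma fin3_mk_two : (⟨2, by omega⟩ : Fin 3) = 2 := rfl

private lemma pderiv_two' (j : Fin 3) : pderiv j (2 : MvPolynomial (Fin 3) k) = 0 := by
  rw [show (2 : MvPolynomial (Fin 3) k) = C 2 from (map_ofNat C 2).symm, pderiv_C]

lemma nagEnd_mul (α β : k) : nagEnd α * nagEnd β = nagEnd (α + β) := by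
  funext i
  show bind₁ (nagEnd β) (nagEnd α i) = nagEnd (α + β) i
  fin_cases i <;>
    simp only [nagEnd, nagDelta, Fin.isValue, Fin.zero_eta, Fin.mk_one, fin3_mk_two,
      Fin.reduceEq, if_true, if_false, ite_true, ite_false, reduceIte,
      map_add, map_sub, map_mul, map_pow, map_ofNat,
      bind₁_X_right, bind₁_C_right, bind₁_X_right_pe, bind₁_C_right_pe, C_mul, C_add, C_pow] <;>
    ring

lemma nagEnd_zero : nagEnd (0 : k) = 1 := by
  funext i
  fin_cases i <;>
    simp [nagEnd, nagDelta, Fin.isValue, Fin.zero_eta, Fin.mk_one, fin3_mk_two]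

lemma jac_nagEnd (α : k) : PolyEnd.jac (nagEnd α) = 1 := by
  unfold PolyEnd.jac
  rw [Matrix.det_fin_three]
  simp only [Matrix.of_apply, nagEnd, nagDelta, Fin.isValue, Fin.reduceEq, reduceIte,
    ite_true, ite_false, map_add, map_sub, map_mul, map_pow, map_ofNat]
  simp only [pderiv_X_self, pderiv_X_of_ne (by decide : (0:Fin 3) ≠ 1),
    pderiv_X_of_ne (by decide : (0:Fin 3) ≠ 2), pderiv_X_of_ne (by decide : (1:Fin 3) ≠ 0),
    pderiv_X_of_ne (by decide : (1:Fin 3) ≠ 2), pderiv_X_of_ne (by decide : (2:Fin 3) ≠ 0),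
    pderiv_X_of_ne (by decide : (2:Fin 3) ≠ 1), pderiv_mul, pderiv_C, pderiv_two', pderiv_pow,
    map_add, map_sub, smul_eq_mul, Nat.cast_ofNat]
  ring

/-- The Nagata map as a unit, with inverse `N_{-α}`. -/
noncomputable def nagAut (α : k) : PolyAut k 3 where
  val := nagEnd α
  inv := nagEnd (-α)
  val_inv := by rw [nagEnd_mul, add_neg_cancel, nagEnd_zero]
  inv_val := by rw [nagEnd_mul, neg_add_cancel, nagEnd_zero]

/-- The diagonal scaling `(a x₁, x₂, c x₃)`. -/
noncomputable def sEnd (a c : k) : PolyEnd k 3 := fun i =>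
  if i = 0 then C a * X 0 else if i = 1 then X 1 else C c * X 2

lemma sEnd_mul (a c a' c' : k) : sEnd a c * sEnd a' c' = sEnd (a * a') (c * c') := by
  funext i
  show bind₁ (sEnd a' c') (sEnd a c i) = sEnd (a * a') (c * c') i
  fin_cases i <;>
    simp only [sEnd, Fin.isValue, Fin.zero_eta, Fin.mk_one, fin3_mk_two, Fin.reduceEq,
      reduceIte, ite_true, ite_false, map_mul, bind₁_X_right, bind₁_C_right, bind₁_X_right_pe,
      bind₁_C_right_pe, C_mul] <;>
    ring

lemma sEnd_one : sEnd (1 : k) 1 = 1 := by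
  funext i
  fin_cases i <;>
    simp [sEnd, Fin.isValue, Fin.zero_eta, Fin.mk_one, fin3_mk_two]

noncomputable def sAut (a c : k) (h : a * c = 1) : PolyAut k 3 where
  val := sEnd a c
  inv := sEnd c a
  val_inv := by rw [sEnd_mul, h, mul_comm c a, h, sEnd_one]
  inv_val := by rw [sEnd_mul, mul_comm c a, h, sEnd_one]

lemma jac_sEnd (a c : k) (h : a * c = 1) : PolyEnd.jac (sEnd a c) = 1 := by
  unfold PolyEnd.jac
  rw [Matrix.det_fin_three]
  simp only [Matrix.of_apply, sEnd, Fin.isValue, Fin.reduceEq, reduceIte, ite_true, ite_false,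
    pderiv_mul, pderiv_C, pderiv_X_self, pderiv_X_of_ne (by decide : (0:Fin 3) ≠ 1),
    pderiv_X_of_ne (by decide : (0:Fin 3) ≠ 2), pderiv_X_of_ne (by decide : (1:Fin 3) ≠ 0),
    pderiv_X_of_ne (by decide : (1:Fin 3) ≠ 2), pderiv_X_of_ne (by decide : (2:Fin 3) ≠ 0),
    pderiv_X_of_ne (by decide : (2:Fin 3) ≠ 1), smul_eq_mul]
  ring_nf
  rw [← C_mul, h, C_1]

lemma sAut_memSL (a c : k) (h : a * c = 1) : MemSL (sAut a c h) := by
  refine ⟨!![a,0,0;0,1,0;0,0,c], by simp [Matrix.det_fin_three, h], ?_⟩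
  funext i
  show sEnd a c i = linEnd _ i
  fin_cases i <;>
    simp [sEnd, linEnd, Fin.sum_univ_three, Fin.isValue, Fin.zero_eta, Fin.mk_one, fin3_mk_two]

lemma s_nag_comm (a c α : k) (h : a * c = 1) :
    sEnd a c * nagEnd (c * α) = nagEnd α * sEnd a c := by
  have hC : (C a : MvPolynomial (Fin 3) k) * C c = 1 := by rw [← C_mul, h, C_1]
  funext i
  show bind₁ (nagEnd (c * α)) (sEnd a c i) = bind₁ (sEnd a c) (nagEnd α i)
  fin_cases i <;>
    simp only [sEnd, nagEnd, nagDelta, Fin.isValue, Fin.zero_eta, Fin.mk_one, fin3_mk_two,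
      Fin.reduceEq, reduceIte, ite_true, ite_false, map_add, map_sub, map_mul, map_pow,
      map_ofNat, bind₁_X_right, bind₁_C_right, bind₁_X_right_pe, bind₁_C_right_pe, C_mul, C_add,
      C_pow]
  · linear_combination (-2 * C α * X 1 ^ 3 - C α ^ 2 * C c * X 2 *
      ((X 0 * X 2 + X 1 ^ 2) ^ 2 - X 0 * X 2 * ((X 0 * X 2 + X 1 ^ 2) +
        (C a * C c * X 0 * X 2 + X 1 ^ 2)))) * hC
  · linear_combination (- C α * C c * X 0 * X 2 ^ 2) * hC

end NagataHelpers
/-- **Example (the Nagata automorphism).**  `N_α ∘ N_β = N_{α+β}`, each `N_α` is an automorphism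
of Jacobian 1, and if `|k| > 2` then every normal subgroup of `SAut_k(𝔸³)` containing `SL₃(k)`
contains all the `N_α`; in particular it contains the Nagata automorphism `N₁`. -/
theorem nagata_mem_normal_subgroup_containing_SL {k : Type*} [Field k] :
    (∀ α β : k, nagEnd α * nagEnd β = nagEnd (α + β)) ∧
    (∀ α : k, ∃ u : PolyAut k 3, u.val = nagEnd α ∧ u ∈ SAutGrp k 3) ∧
    ((∃ x y z : k, x ≠ y ∧ x ≠ z ∧ y ≠ z) →
      ∀ N : Subgroup ↥(SAutGrp k 3), N.Normal →
        (∀ f : ↥(SAutGrp k 3), MemSL (f : PolyAut k 3) → f ∈ N) →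
        ∀ (α : k) (u : ↥(SAutGrp k 3)), (u : PolyAut k 3).val = nagEnd α → u ∈ N) := by
  refine ⟨nagEnd_mul, fun α => ⟨nagAut α, rfl, jac_nagEnd α⟩, ?_⟩
  rintro ⟨x, y, z, hxy, hxz, hyz⟩ N hNorm hSL α u hu
  obtain ⟨l, hl0, hl1⟩ : ∃ l : k, l ≠ 0 ∧ l ≠ 1 := by
    by_cases hx : x ≠ 0 ∧ x ≠ 1
    · exact ⟨x, hx⟩
    by_cases hy : y ≠ 0 ∧ y ≠ 1
    · exact ⟨y, hy⟩
    rw [not_and_or, not_not, not_not] at hx hy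
    rcases hx with h | h <;> rcases hy with h' | h' <;> subst h <;> subst h'
    · exact absurd rfl hxy
    · exact ⟨z, Ne.symm hxz, Ne.symm hyz⟩
    · exact ⟨z, Ne.symm hyz, Ne.symm hxz⟩
    · exact absurd rfl hxy
  have hl1' : l - 1 ≠ 0 := sub_ne_zero.mpr hl1
  set β := α / (l - 1) with hβ
  have hac : l⁻¹ * l = 1 := inv_mul_cancel₀ hl0
  have hgS : sAut l⁻¹ l hac ∈ SAutGrp k 3 := jac_sEnd l⁻¹ l hac
  have hvS : nagAut β ∈ SAutGrp k 3 := jac_nagEnd β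
  let g' : ↥(SAutGrp k 3) := ⟨sAut l⁻¹ l hac, hgS⟩
  let v' : ↥(SAutGrp k 3) := ⟨nagAut β, hvS⟩
  have hg'N : g' ∈ N := hSL g' (sAut_memSL l⁻¹ l hac)
  have hmem : g'⁻¹ * (v' * g' * v'⁻¹) ∈ N :=
    N.mul_mem (N.inv_mem hg'N) (hNorm.conj_mem g' hg'N v')
  have hgw : sAut l⁻¹ l hac * nagAut (l * β) = nagAut β * sAut l⁻¹ l hac :=
    Units.ext (s_nag_comm l⁻¹ l β hac)
  have h1 : (sAut l⁻¹ l hac)⁻¹ * (nagAut β * sAut l⁻¹ l hac) = nagAut (l * β) := by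
    rw [← hgw, inv_mul_cancel_left]
  have hs : l * β + -β = α := by
    rw [hβ]; field_simp; ring
  have h2 : nagAut (l * β) * (nagAut β)⁻¹ = nagAut α := by
    refine Units.ext ?_
    show nagEnd (l * β) * nagEnd (-β) = nagEnd α
    rw [nagEnd_mul, hs]
  have hkey : (sAut l⁻¹ l hac)⁻¹ * (nagAut β * sAut l⁻¹ l hac * (nagAut β)⁻¹) = nagAut α := by
    rw [← mul_assoc, h1, h2]
  have hu' : u = g'⁻¹ * (v' * g' * v'⁻¹) := by
    apply Subtype.ext
    have hco : ((g'⁻¹ * (v' * g' * v'⁻¹) : ↥(SAutGrp k 3)) : PolyAut k 3)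
        = (sAut l⁻¹ l hac)⁻¹ * (nagAut β * sAut l⁻¹ l hac * (nagAut β)⁻¹) := rfl
    rw [hco, hkey]
    exact Units.ext hu
  rw [hu']; exact hmem
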